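/- (Upper bound on the speed of convergence, λ > 0) Let c be α-Hölder continuous on ℝ^d × ℝ^d with α ∈ (0,1], and assume v_∞ ≥ 1+λ for some λ > 0. Then v_p − v_∞ ≤ O(e^{−βp}) as p → ∞, with β = min{α, log(1+λ)}; that is, there exist B > 0 and p_0 ≥ 1 such that v_p − v_∞ ≤ B·e^{−βp} for all p ≥ p_0. -/

import Mathlib

open MeasureTheory ENNReal Filter
open scoped Classical

noncomputable section

/-- ℝ^d with its Euclidean structure. -/
abbrev Rd (d : ℕ) := EuclideanSpace ℝ (Fin d)

/-- γ ∈ Π(μ,ν): γ has first marginal μ and second marginal ν. -/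
def IsCoupling {E F : Type*} [MeasurableSpace E] [MeasurableSpace F]
    (γ : Measure (E × F)) (μ : Measure E) (ν : Measure F) : Prop :=
  γ.map Prod.fst = μ ∧ γ.map Prod.snd = ν

/-- Relative entropy H(γ|ρ) = ∫ log(dγ/dρ) dγ if γ ≪ ρ (and the integral exists), +∞ otherwise. -/
def relEntropy {E : Type*} [MeasurableSpace E] (γ ρ : Measure E) : ℝ≥0∞ :=
  if γ ≪ ρ ∧ Integrable (llr γ ρ) γ then ENNReal.ofReal (∫ z, llr γ ρ z ∂γ) else ∞

/-- The entropic functional J_{p,ε}(γ) = (∫ c^p dγ + ε H(γ|μ⊗ν))^{1/p} on Π(μ,ν), +∞ outside. -/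
def Jpe {d : ℕ} (c : Rd d × Rd d → ℝ) (μ ν : Measure (Rd d)) (p ε : ℝ)
    (γ : Measure (Rd d × Rd d)) : ℝ≥0∞ :=
  if IsCoupling γ μ ν then
    (∫⁻ z, ENNReal.ofReal (c z ^ p) ∂γ + ENNReal.ofReal ε * relEntropy γ (μ.prod ν)) ^ (1 / p)
  else ∞

/-- The supremal functional J_∞(γ) = γ-ess sup c on Π(μ,ν), +∞ outside. -/
def Jinf {d : ℕ} (c : Rd d × Rd d → ℝ) (μ ν : Measure (Rd d))
    (γ : Measure (Rd d × Rd d)) : ℝ≥0∞ :=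
  if IsCoupling γ μ ν then essSup (fun z => ENNReal.ofReal (c z)) γ else ∞

/-- Weak-star convergence of a family of (probability) measures, as the real parameter p → ∞. -/
def WeakStarTendsto {E : Type*} [MeasurableSpace E] [TopologicalSpace E]
    (γ : ℝ → Measure E) (γ₀ : Measure E) : Prop :=
  ∀ f : BoundedContinuousFunction E ℝ,
    Tendsto (fun p => ∫ z, f z ∂(γ p)) atTop (nhds (∫ z, f z ∂γ₀))

/-- The support of a Borel measure: points all of whose neighborhoods have positive measure. -/
def msupport {E : Type*} [MeasurableSpace E] [TopologicalSpace E] (μ : Measure E) : Set E :=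
  {x | ∀ U ∈ nhds x, μ U ≠ 0}

/-- v_p := min_{γ ∈ Π(μ,ν)} J_p(γ), with J_p = J_{p,1}. -/
def vP {d : ℕ} (c : Rd d × Rd d → ℝ) (μ ν : Measure (Rd d)) (p : ℝ) : ℝ≥0∞ :=
  ⨅ (γ : Measure (Rd d × Rd d)) (_ : IsProbabilityMeasure γ) (_ : IsCoupling γ μ ν),
    Jpe c μ ν p 1 γ

/-- v_∞ := min_{γ ∈ Π(μ,ν)} J_∞(γ). -/
def vInfty {d : ℕ} (c : Rd d × Rd d → ℝ) (μ ν : Measure (Rd d)) : ℝ≥0∞ :=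
  ⨅ (γ : Measure (Rd d × Rd d)) (_ : IsProbabilityMeasure γ) (_ : IsCoupling γ μ ν),
    Jinf c μ ν γ

lemma msupport_compl_null {E : Type*} [MeasurableSpace E] [TopologicalSpace E]
    [SecondCountableTopology E] [OpensMeasurableSpace E] (μ : Measure E) :
    μ (msupport μ)ᶜ = 0 := by
  obtain ⟨B, hBc, -, hBb⟩ := TopologicalSpace.exists_countable_basis E
  set N : Set (Set E) := {b ∈ B | μ b = 0}
  have hsub : (msupport μ)ᶜ ⊆ ⋃ b ∈ N, b := by
    intro x hx
    simp only [msupport, Set.mem_compl_iff, Set.mem_setOf_eq, not_forall] at hx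
    obtain ⟨U, hU, hU0⟩ := hx
    push_neg at hU0
    obtain ⟨b, hbB, hxb, hbU⟩ := hBb.mem_nhds_iff.mp hU
    refine Set.mem_biUnion ⟨hbB, measure_mono_null hbU hU0⟩ hxb
  refine measure_mono_null hsub ?_
  exact (measure_biUnion_null_iff (hBc.mono (Set.sep_subset _ _))).mpr fun b hb => hb.2

lemma abs_coord_le_norm {d : ℕ} (x : Rd d) (k : Fin d) : |x k| ≤ ‖x‖ := by
  rw [EuclideanSpace.norm_eq, ← Real.sqrt_sq_eq_abs]
  apply Real.sqrt_le_sqrt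
  have := Finset.single_le_sum (f := fun i => ‖x i‖ ^ 2)
    (fun i _ => sq_nonneg _) (Finset.mem_univ k)
  simpa [Real.norm_eq_abs, sq_abs] using this

/-- cell index map -/
def qc {d : ℕ} (h : ℝ) (x : Rd d) : Fin d → ℤ := fun k => ⌊x k / h⌋

lemma measurable_qc {d : ℕ} (h : ℝ) : Measurable (qc (d := d) h) := by
  apply measurable_pi_lambda
  intro k
  have m1 : Measurable (fun x : Rd d => x k) := (measurable_pi_apply k).comp (WithLp.measurable_ofLp 2 _)
  exact (m1.div_const h).floor

lemma dist_le_of_qc_eq {d : ℕ} {h : ℝ} (hh : 0 < h) {x y : Rd d} (hxy : qc h x = qc h y) :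
    dist x y ≤ h * Real.sqrt d := by
  have key : ∀ k, |x k - y k| ≤ h := by
    intro k
    have hq : ⌊x k / h⌋ = ⌊y k / h⌋ := congrFun hxy k
    have h1 : (⌊x k / h⌋ : ℝ) ≤ x k / h := Int.floor_le _
    have h2 : x k / h < ⌊x k / h⌋ + 1 := Int.lt_floor_add_one _
    have h3 : (⌊x k / h⌋ : ℝ) ≤ y k / h := by rw [hq]; exact Int.floor_le _
    have h4 : y k / h < ⌊x k / h⌋ + 1 := by rw [hq]; exact Int.lt_floor_add_one _
    have : |x k / h - y k / h| ≤ 1 := by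
      rw [abs_le]; constructor <;> nlinarith
    rw [← sub_div, abs_div, abs_of_pos hh] at this
    calc |x k - y k| = |x k - y k| / h * h := by field_simp
    _ ≤ 1 * h := by nlinarith [abs_nonneg (x k - y k)]
    _ = h := one_mul h
  rw [EuclideanSpace.dist_eq]
  have : ∑ k, dist (x k) (y k) ^ 2 ≤ (d : ℝ) * h ^ 2 := by
    calc ∑ k, dist (x k) (y k) ^ 2 ≤ ∑ _k : Fin d, h ^ 2 := by
          apply Finset.sum_le_sum; intro k _
          have := key k
          rw [Real.dist_eq]
          nlinarith [abs_nonneg (x k - y k)]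
    _ = (d : ℝ) * h ^ 2 := by simp [Finset.sum_const, mul_comm]
  calc Real.sqrt (∑ k, dist (x k) (y k) ^ 2) ≤ Real.sqrt ((d : ℝ) * h ^ 2) :=
        Real.sqrt_le_sqrt this
  _ = h * Real.sqrt d := by
        rw [show (d : ℝ) * h ^ 2 = h ^ 2 * d by ring, Real.sqrt_mul (sq_nonneg h),
          Real.sqrt_sq hh.le]

lemma ENNReal.div_mul_aux {w a b : ℝ≥0∞} (hb0 : b ≠ 0) (hb : b ≠ ∞) (ha : a ≠ ∞) :
    w / (a * b) * b = w / a := by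
  rw [div_eq_mul_inv, ENNReal.mul_inv (Or.inr hb) (Or.inl ha), ← mul_assoc, mul_assoc,
    ENNReal.inv_mul_cancel hb0 hb, mul_one, div_eq_mul_inv]

section Block
variable {d : ℕ}

def cellS (d : ℕ) (h : ℝ) (i : Fin d → ℤ) : Set (Rd d) := qc h ⁻¹' {i}

lemma measurableSet_cellS (h : ℝ) (i : Fin d → ℤ) : MeasurableSet (cellS d h i) :=
  measurable_qc h (measurableSet_singleton i)

lemma mem_cellS_self (h : ℝ) (x : Rd d) : x ∈ cellS d h (qc h x) := rfl

lemma iUnion_cellS (h : ℝ) : (⋃ i, cellS d h i) = (Set.univ : Set (Rd d)) := by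
  ext x; simp only [Set.mem_iUnion, Set.mem_univ, iff_true]
  exact ⟨qc h x, mem_cellS_self h x⟩

lemma disjoint_cellS (h : ℝ) : Pairwise (Function.onFun Disjoint (cellS d h)) := by
  intro i j hij
  simp only [Function.onFun, cellS, Set.disjoint_left]
  rintro x (hx : qc h x = i) (hy : qc h x = j)
  exact hij (hx ▸ hy ▸ rfl)

variable (μ ν : Measure (Rd d)) (γ : Measure (Rd d × Rd d)) (h : ℝ)

def cw (s : (Fin d → ℤ) × (Fin d → ℤ)) : ℝ≥0∞ := γ (cellS d h s.1 ×ˢ cellS d h s.2)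

def bg (s : (Fin d → ℤ) × (Fin d → ℤ)) : ℝ≥0∞ :=
  cw γ h s / (μ (cellS d h s.1) * ν (cellS d h s.2))

def bf (z : Rd d × Rd d) : ℝ≥0∞ := bg μ ν γ h (qc h z.1, qc h z.2)

def blockM : Measure (Rd d × Rd d) := (μ.prod ν).withDensity (bf μ ν γ h)

lemma measurable_bf : Measurable (bf μ ν γ h) := by
  have : Measurable (fun z : Rd d × Rd d => (qc h z.1, qc h z.2)) :=
    ((measurable_qc h).comp measurable_fst).prodMk ((measurable_qc h).comp measurable_snd)
  exact (measurable_of_countable (bg μ ν γ h)).comp this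

variable {μ ν γ}

lemma cw_le_fst (hcpl : IsCoupling γ μ ν) (s : (Fin d → ℤ) × (Fin d → ℤ)) :
    cw γ h s ≤ μ (cellS d h s.1) := by
  have : μ (cellS d h s.1) = γ (Prod.fst ⁻¹' cellS d h s.1) := by
    rw [← hcpl.1, Measure.map_apply measurable_fst (measurableSet_cellS h s.1)]
  rw [this]
  exact measure_mono fun z hz => hz.1

lemma cw_le_snd (hcpl : IsCoupling γ μ ν) (s : (Fin d → ℤ) × (Fin d → ℤ)) :
    cw γ h s ≤ ν (cellS d h s.2) := by
  have : ν (cellS d h s.2) = γ (Prod.snd ⁻¹' cellS d h s.2) := by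
    rw [← hcpl.2, Measure.map_apply measurable_snd (measurableSet_cellS h s.2)]
  rw [this]
  exact measure_mono fun z hz => hz.2

lemma tsum_cw_fst (hcpl : IsCoupling γ μ ν) (i : Fin d → ℤ) :
    ∑' j, cw γ h (i, j) = μ (cellS d h i) := by
  have hdisj : Pairwise (Function.onFun Disjoint (fun j => (cellS d h i) ×ˢ (cellS d h j))) :=
    fun a b hab => Set.disjoint_prod.mpr (Or.inr (disjoint_cellS h hab))
  have h1 : γ (⋃ j, (cellS d h i) ×ˢ (cellS d h j)) = ∑' j, cw γ h (i, j) :=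
    measure_iUnion hdisj fun j => (measurableSet_cellS h i).prod (measurableSet_cellS h j)
  have hU : (⋃ j, (cellS d h i) ×ˢ (cellS d h j)) = (cellS d h i) ×ˢ (Set.univ : Set (Rd d)) := by
    rw [← Set.prod_iUnion, iUnion_cellS]
  have h2 : μ (cellS d h i) = γ ((cellS d h i) ×ˢ (Set.univ : Set (Rd d))) := by
    rw [← hcpl.1, Measure.map_apply measurable_fst (measurableSet_cellS h i)]
    congr 1
    ext z; simp [Set.mem_prod]
  rw [h2, ← hU, h1]

lemma tsum_cw_snd (hcpl : IsCoupling γ μ ν) (j : Fin d → ℤ) :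
    ∑' i, cw γ h (i, j) = ν (cellS d h j) := by
  have hdisj : Pairwise (Function.onFun Disjoint (fun i => (cellS d h i) ×ˢ (cellS d h j))) :=
    fun a b hab => Set.disjoint_prod.mpr (Or.inl (disjoint_cellS h hab))
  have h1 : γ (⋃ i, (cellS d h i) ×ˢ (cellS d h j)) = ∑' i, cw γ h (i, j) :=
    measure_iUnion hdisj fun i => (measurableSet_cellS h i).prod (measurableSet_cellS h j)
  have hU : (⋃ i, (cellS d h i) ×ˢ (cellS d h j)) = (Set.univ : Set (Rd d)) ×ˢ (cellS d h j) := by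
    rw [← Set.iUnion_prod_const, iUnion_cellS]
  have h2 : ν (cellS d h j) = γ ((Set.univ : Set (Rd d)) ×ˢ (cellS d h j)) := by
    rw [← hcpl.2, Measure.map_apply measurable_snd (measurableSet_cellS h j)]
    congr 1
    ext z; simp [Set.mem_prod]
  rw [h2, ← hU, h1]

variable [IsProbabilityMeasure μ] [IsProbabilityMeasure ν]

lemma blockM_cell (hcpl : IsCoupling γ μ ν) (s : (Fin d → ℤ) × (Fin d → ℤ)) :
    blockM μ ν γ h ((cellS d h s.1) ×ˢ (cellS d h s.2)) = cw γ h s := by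
  rw [blockM, withDensity_apply _ ((measurableSet_cellS h s.1).prod (measurableSet_cellS h s.2))]
  have hconst : ∀ z ∈ (cellS d h s.1) ×ˢ (cellS d h s.2), bf μ ν γ h z = bg μ ν γ h s := by
    rintro ⟨x, y⟩ ⟨hx, hy⟩
    have hqx : qc h x = s.1 := hx
    have hqy : qc h y = s.2 := hy
    simp only [bf, hqx, hqy]
  rw [setLIntegral_congr_fun ((measurableSet_cellS h s.1).prod (measurableSet_cellS h s.2))
    hconst, setLIntegral_const, Measure.prod_prod]
  by_cases h0 : μ (cellS d h s.1) * ν (cellS d h s.2) = 0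
  · have hw : cw γ h s = 0 := by
      rcases mul_eq_zero.mp h0 with h' | h'
      · exact le_antisymm (h' ▸ cw_le_fst h hcpl s) zero_le
      · exact le_antisymm (h' ▸ cw_le_snd h hcpl s) zero_le
    rw [bg, hw, ENNReal.zero_div, zero_mul]
  · rw [bg, ENNReal.div_mul_cancel h0 (ENNReal.mul_ne_top (measure_ne_top μ _) (measure_ne_top ν _))]

omit [IsProbabilityMeasure μ] [IsProbabilityMeasure ν] in
lemma ae_good_fst : ∀ᵐ x ∂μ, μ (cellS d h (qc h x)) ≠ 0 := by
  rw [ae_iff]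
  push_neg
  have hsub : {x | μ (cellS d h (qc h x)) = 0} ⊆
      ⋃ i ∈ {i : Fin d → ℤ | μ (cellS d h i) = 0}, cellS d h i := by
    intro x hx
    exact Set.mem_biUnion hx (mem_cellS_self h x)
  refine measure_mono_null hsub ((measure_biUnion_null_iff (Set.to_countable _)).mpr ?_)
  exact fun i hi => hi

omit [IsProbabilityMeasure μ] [IsProbabilityMeasure ν] in
lemma ae_good_snd : ∀ᵐ y ∂ν, ν (cellS d h (qc h y)) ≠ 0 := by
  rw [ae_iff]
  push_neg
  have hsub : {y | ν (cellS d h (qc h y)) = 0} ⊆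
      ⋃ i ∈ {i : Fin d → ℤ | ν (cellS d h i) = 0}, cellS d h i := by
    intro y hy
    exact Set.mem_biUnion hy (mem_cellS_self h y)
  refine measure_mono_null hsub ((measure_biUnion_null_iff (Set.to_countable _)).mpr ?_)
  exact fun i hi => hi

lemma blockM_fst (hcpl : IsCoupling γ μ ν) : (blockM μ ν γ h).map Prod.fst = μ := by
  ext S hS
  rw [Measure.map_apply measurable_fst hS]
  have hpre : Prod.fst ⁻¹' S = S ×ˢ (Set.univ : Set (Rd d)) := by ext z; simp
  rw [hpre, blockM, withDensity_apply _ (hS.prod MeasurableSet.univ),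
    ← Measure.prod_restrict, Measure.restrict_univ,
    lintegral_prod _ ((measurable_bf μ ν γ h).aemeasurable)]
  have inner : ∀ x : Rd d, ∫⁻ y, bf μ ν γ h (x, y) ∂ν
      = ∑' j, bg μ ν γ h (qc h x, j) * ν (cellS d h j) := by
    intro x
    calc ∫⁻ y, bf μ ν γ h (x, y) ∂ν
        = ∫⁻ j, bg μ ν γ h (qc h x, j) ∂(ν.map (qc h)) :=
          (lintegral_map (measurable_of_countable (fun j => bg μ ν γ h (qc h x, j)))
            (measurable_qc h)).symm
      _ = ∑' j, bg μ ν γ h (qc h x, j) * (ν.map (qc h)) {j} := by rw [lintegral_countable']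
      _ = ∑' j, bg μ ν γ h (qc h x, j) * ν (cellS d h j) := by
          congr 1; ext j
          rw [Measure.map_apply (measurable_qc h) (measurableSet_singleton j)]
          rfl
  have hae : ∀ᵐ x ∂μ, (∫⁻ y, bf μ ν γ h (x, y) ∂ν) = 1 := by
    filter_upwards [ae_good_fst (μ := μ) h] with x hx
    rw [inner]
    have hterm : ∀ j, bg μ ν γ h (qc h x, j) * ν (cellS d h j)
        = cw γ h (qc h x, j) / μ (cellS d h (qc h x)) := by
      intro j
      by_cases hν0 : ν (cellS d h j) = 0
      · have hw0 : cw γ h (qc h x, j) = 0 :=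
          le_antisymm (by simpa [hν0] using cw_le_snd h hcpl (qc h x, j)) zero_le
        rw [bg, hw0, ENNReal.zero_div, zero_mul, ENNReal.zero_div]
      · exact ENNReal.div_mul_aux hν0 (measure_ne_top ν _) (measure_ne_top μ _)
    simp_rw [hterm, div_eq_mul_inv]
    rw [ENNReal.tsum_mul_right, tsum_cw_fst h hcpl, ← div_eq_mul_inv,
      ENNReal.div_self hx (measure_ne_top μ _)]
  calc ∫⁻ x in S, ∫⁻ y, bf μ ν γ h (x, y) ∂ν ∂μ
      = ∫⁻ x in S, 1 ∂μ := lintegral_congr_ae (ae_restrict_of_ae hae)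
    _ = μ S := setLIntegral_one S

lemma blockM_snd (hcpl : IsCoupling γ μ ν) : (blockM μ ν γ h).map Prod.snd = ν := by
  ext S hS
  rw [Measure.map_apply measurable_snd hS]
  have hpre : Prod.snd ⁻¹' S = (Set.univ : Set (Rd d)) ×ˢ S := by ext z; simp
  rw [hpre, blockM, withDensity_apply _ (MeasurableSet.univ.prod hS),
    ← Measure.prod_restrict, Measure.restrict_univ,
    lintegral_prod_symm _ ((measurable_bf μ ν γ h).aemeasurable)]
  have inner : ∀ y : Rd d, ∫⁻ x, bf μ ν γ h (x, y) ∂μ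
      = ∑' i, bg μ ν γ h (i, qc h y) * μ (cellS d h i) := by
    intro y
    calc ∫⁻ x, bf μ ν γ h (x, y) ∂μ
        = ∫⁻ i, bg μ ν γ h (i, qc h y) ∂(μ.map (qc h)) :=
          (lintegral_map (measurable_of_countable (fun i => bg μ ν γ h (i, qc h y)))
            (measurable_qc h)).symm
      _ = ∑' i, bg μ ν γ h (i, qc h y) * (μ.map (qc h)) {i} := by rw [lintegral_countable']
      _ = ∑' i, bg μ ν γ h (i, qc h y) * μ (cellS d h i) := by
          congr 1; ext i
          rw [Measure.map_apply (measurable_qc h) (measurableSet_singleton i)]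
          rfl
  have hae : ∀ᵐ y ∂ν, (∫⁻ x, bf μ ν γ h (x, y) ∂μ) = 1 := by
    filter_upwards [ae_good_snd (ν := ν) h] with y hy
    rw [inner]
    have hterm : ∀ i, bg μ ν γ h (i, qc h y) * μ (cellS d h i)
        = cw γ h (i, qc h y) / ν (cellS d h (qc h y)) := by
      intro i
      by_cases hμ0 : μ (cellS d h i) = 0
      · have hw0 : cw γ h (i, qc h y) = 0 :=
          le_antisymm (by simpa [hμ0] using cw_le_fst h hcpl (i, qc h y)) zero_le
        rw [bg, hw0, ENNReal.zero_div, zero_mul, ENNReal.zero_div]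
      · rw [bg, mul_comm (μ (cellS d h i))]
        exact ENNReal.div_mul_aux hμ0 (measure_ne_top μ _) (measure_ne_top ν _)
    simp_rw [hterm, div_eq_mul_inv]
    rw [ENNReal.tsum_mul_right, tsum_cw_snd h hcpl, ← div_eq_mul_inv,
      ENNReal.div_self hy (measure_ne_top ν _)]
  calc ∫⁻ y in S, ∫⁻ x, bf μ ν γ h (x, y) ∂μ ∂ν
      = ∫⁻ y in S, 1 ∂ν := lintegral_congr_ae (ae_restrict_of_ae hae)
    _ = ν S := setLIntegral_one S

lemma blockM_isCoupling (hcpl : IsCoupling γ μ ν) : IsCoupling (blockM μ ν γ h) μ ν :=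
  ⟨blockM_fst h hcpl, blockM_snd h hcpl⟩

lemma blockM_prob (hcpl : IsCoupling γ μ ν) : IsProbabilityMeasure (blockM μ ν γ h) := by
  constructor
  have : (Set.univ : Set (Rd d × Rd d)) = Prod.fst ⁻¹' Set.univ := rfl
  rw [this, ← Measure.map_apply measurable_fst MeasurableSet.univ, blockM_fst h hcpl]
  exact measure_univ

-- ### chunk 3 starts here

def q2 (d : ℕ) (h : ℝ) (z : Rd d × Rd d) : (Fin d → ℤ) × (Fin d → ℤ) := (qc h z.1, qc h z.2)

lemma measurable_q2 (h : ℝ) : Measurable (q2 d h) :=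
  ((measurable_qc h).comp measurable_fst).prodMk ((measurable_qc h).comp measurable_snd)

lemma q2_preimage_singleton (h : ℝ) (s : (Fin d → ℤ) × (Fin d → ℤ)) :
    q2 d h ⁻¹' {s} = (cellS d h s.1) ×ˢ (cellS d h s.2) := by
  ext z
  simp only [q2, Set.mem_preimage, Set.mem_singleton_iff, Set.mem_prod, Prod.ext_iff]
  rfl

lemma ae_active (hcpl : IsCoupling γ μ ν) :
    ∀ᵐ z ∂(blockM μ ν γ h), cw γ h (q2 d h z) ≠ 0 := by
  rw [ae_iff]
  push_neg
  have hsub : {z | cw γ h (q2 d h z) = 0} ⊆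
      ⋃ s ∈ {s | cw γ h s = 0}, q2 d h ⁻¹' {s} := by
    intro z hz
    exact Set.mem_biUnion hz rfl
  refine measure_mono_null hsub ((measure_biUnion_null_iff (Set.to_countable _)).mpr ?_)
  intro s hs
  rw [q2_preimage_singleton, blockM_cell h hcpl]
  exact hs

/-- blockM of a cell pair, via q2 preimage -/
lemma blockM_q2_singleton (hcpl : IsCoupling γ μ ν) (s : (Fin d → ℤ) × (Fin d → ℤ)) :
    blockM μ ν γ h (q2 d h ⁻¹' {s}) = cw γ h s := by
  rw [q2_preimage_singleton, blockM_cell h hcpl]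

/-- cost bound on the block measure -/
lemma blockM_ae_cost (hh : 0 < h) (hcpl : IsCoupling γ μ ν)
    (c : Rd d × Rd d → ℝ) (hc : Continuous c)
    (A αe : ℝ) (hA : 0 ≤ A) (hαe : 0 < αe)
    (hHolder : ∀ z w : Rd d × Rd d, |c z - c w| ≤ A * dist z w ^ αe)
    (t : ℝ) (hγt : ∀ᵐ z ∂γ, c z ≤ t) :
    ∀ᵐ z ∂(blockM μ ν γ h), c z ≤ t + A * (h * Real.sqrt d) ^ αe := by
  filter_upwards [ae_active h hcpl] with z hz
  -- the cell pair of z carries positive γ-mass, so it contains a point with c ≤ t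
  set s := q2 d h z with hs
  have hmeas : MeasurableSet {w : Rd d × Rd d | ¬ c w ≤ t} :=
    ((measurableSet_le (hc.measurable) measurable_const)).compl
  have hnull : γ {w | ¬ c w ≤ t} = 0 := hγt
  have hpos : γ ((cellS d h s.1 ×ˢ cellS d h s.2) ∩ {w | c w ≤ t}) ≠ 0 := by
    intro h0
    apply hz
    have : (cellS d h s.1 ×ˢ cellS d h s.2) ⊆
        ((cellS d h s.1 ×ˢ cellS d h s.2) ∩ {w | c w ≤ t}) ∪ {w | ¬ c w ≤ t} := by
      intro w hw
      by_cases hct : c w ≤ t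
      · exact Or.inl ⟨hw, hct⟩
      · exact Or.inr hct
    have hle : γ (cellS d h s.1 ×ˢ cellS d h s.2) ≤
        γ ((cellS d h s.1 ×ˢ cellS d h s.2) ∩ {w | c w ≤ t}) + γ {w | ¬ c w ≤ t} :=
      (measure_mono this).trans (measure_union_le _ _)
    rw [h0, hnull, add_zero] at hle
    exact le_antisymm hle zero_le
  obtain ⟨z₀, hz₀cell, hz₀c⟩ := nonempty_of_measure_ne_zero hpos
  -- z is in the same cell pair
  have hzcell : z ∈ cellS d h s.1 ×ˢ cellS d h s.2 := by
    rw [← q2_preimage_singleton]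
    exact rfl
  have hq1 : qc h z.1 = qc h z₀.1 := by
    have h1 : qc h z.1 = s.1 := rfl
    have h2 : qc h z₀.1 = s.1 := hz₀cell.1
    rw [h1, h2]
  have hq2' : qc h z.2 = qc h z₀.2 := by
    have h1 : qc h z.2 = s.2 := rfl
    have h2 : qc h z₀.2 = s.2 := hz₀cell.2
    rw [h1, h2]
  have hdist : dist z z₀ ≤ h * Real.sqrt d := by
    rw [Prod.dist_eq]
    exact max_le (dist_le_of_qc_eq hh hq1) (dist_le_of_qc_eq hh hq2')
  have hδ0 : (0:ℝ) ≤ h * Real.sqrt d := by positivity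
  have hz₀t : c z₀ ≤ t := hz₀c
  calc c z = c z₀ + (c z - c z₀) := by ring
    _ ≤ t + A * dist z z₀ ^ αe := by
        have := (abs_le.mp (hHolder z z₀)).2
        linarith
    _ ≤ t + A * (h * Real.sqrt d) ^ αe := by
        have : dist z z₀ ^ αe ≤ (h * Real.sqrt d) ^ αe :=
          Real.rpow_le_rpow dist_nonneg hdist hαe.le
        nlinarith

/-- The entropy bound -/
lemma blockM_relEntropy_le (hcpl : IsCoupling γ μ ν)
    (hAct : {s : (Fin d → ℤ) × (Fin d → ℤ) | cw γ h s ≠ 0}.Finite) :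
    relEntropy (blockM μ ν γ h) (μ.prod ν) ≤
      ENNReal.ofReal (Real.log ((hAct.toFinset.image Prod.snd).card) + 1) := by
  haveI := blockM_prob (μ := μ) (ν := ν) (γ := γ) h hcpl
  set ρ := μ.prod ν
  set γ' := blockM μ ν γ h with hγ'
  have hac : γ' ≪ ρ := withDensity_absolutelyContinuous _ _
  -- llr is a.e. equal to log (bg (q2 z)).toReal
  have hrn : γ'.rnDeriv ρ =ᵐ[ρ] bf μ ν γ h := Measure.rnDeriv_withDensity ρ (measurable_bf μ ν γ h)
  have hllr : llr γ' ρ =ᵐ[γ'] fun z => Real.log (bf μ ν γ h z).toReal := by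
    filter_upwards [hac.ae_le hrn] with z hz
    simp only [llr_def]
    rw [hz]
  -- a.e. bound on llr
  obtain ⟨C, hC⟩ := ((hAct.image fun s => |Real.log (bg μ ν γ h s).toReal|).bddAbove)
  have hbound : ∀ᵐ z ∂γ', ‖llr γ' ρ z‖ ≤ C := by
    filter_upwards [hllr, ae_active h hcpl] with z h1 h2
    rw [h1, Real.norm_eq_abs]
    exact hC (Set.mem_image_of_mem _ h2)
  have hint : Integrable (llr γ' ρ) γ' :=
    Integrable.mono' (integrable_const C) (measurable_llr γ' ρ).aestronglyMeasurable hbound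
  rw [relEntropy, if_pos ⟨hac, hint⟩]
  apply ENNReal.ofReal_le_ofReal
  -- compute the integral
  have hφsm : StronglyMeasurable (fun s => Real.log (bg μ ν γ h s).toReal) :=
    (measurable_of_countable _).stronglyMeasurable
  have hint2 : Integrable (fun z => Real.log (bg μ ν γ h (q2 d h z)).toReal) γ' :=
    hint.congr hllr
  have hval : ∫ z, llr γ' ρ z ∂γ'
      = ∑' s, ((γ'.map (q2 d h)) {s}).toReal • Real.log (bg μ ν γ h s).toReal := by
    rw [integral_congr_ae hllr]
    have : ∫ z, Real.log (bf μ ν γ h z).toReal ∂γ'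
        = ∫ s, Real.log (bg μ ν γ h s).toReal ∂(γ'.map (q2 d h)) := by
      rw [integral_map (measurable_q2 h).aemeasurable hφsm.aestronglyMeasurable]
      rfl
    rw [this]
    apply integral_countable'
    rw [integrable_map_measure hφsm.aestronglyMeasurable (measurable_q2 h).aemeasurable]
    exact hint2
  rw [hval]
  -- the tsum is a finite sum over active cells
  have hmap : ∀ s, (γ'.map (q2 d h)) {s} = cw γ h s := by
    intro s
    rw [Measure.map_apply (measurable_q2 h) (measurableSet_singleton s),
      blockM_q2_singleton h hcpl]
  have hvanish : ∀ s ∉ hAct.toFinset,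
      ((γ'.map (q2 d h)) {s}).toReal • Real.log (bg μ ν γ h s).toReal = 0 := by
    intro s hs
    rw [Set.Finite.mem_toFinset] at hs
    simp only [Set.mem_setOf_eq, not_not] at hs
    rw [hmap, hs]
    simp
  rw [tsum_eq_sum hvanish]
  -- now a finite sum estimate
  set F := hAct.toFinset with hF
  set J' := F.image Prod.snd with hJ'
  -- each active cell has positive μ, ν masses
  have hposμ : ∀ s ∈ F, μ (cellS d h s.1) ≠ 0 := by
    intro s hs
    rw [hF, Set.Finite.mem_toFinset] at hs
    intro h0
    exact hs (le_antisymm (by simpa [h0] using cw_le_fst h hcpl s) zero_le)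
  have hposν : ∀ s ∈ F, ν (cellS d h s.2) ≠ 0 := by
    intro s hs
    rw [hF, Set.Finite.mem_toFinset] at hs
    intro h0
    exact hs (le_antisymm (by simpa [h0] using cw_le_snd h hcpl s) zero_le)
  -- bound each term by w̃ * (-log ν̃)
  have hterm : ∀ s ∈ F, ((γ'.map (q2 d h)) {s}).toReal • Real.log (bg μ ν γ h s).toReal
      ≤ (cw γ h s).toReal * (- Real.log (ν (cellS d h s.2)).toReal) := by
    intro s hs
    rw [hmap, smul_eq_mul]
    apply mul_le_mul_of_nonneg_left _ ENNReal.toReal_nonneg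
    have hw0 : cw γ h s ≠ 0 := by rw [hF, Set.Finite.mem_toFinset] at hs; exact hs
    have hwtop : cw γ h s ≠ ⊤ := ((cw_le_snd h hcpl s).trans_lt (measure_lt_top ν _)).ne
    have hμ0 := hposμ s hs
    have hν0 := hposν s hs
    have hμt : μ (cellS d h s.1) ≠ ⊤ := measure_ne_top μ _
    have hνt : ν (cellS d h s.2) ≠ ⊤ := measure_ne_top ν _
    have hbg : (bg μ ν γ h s).toReal
        = (cw γ h s).toReal / ((μ (cellS d h s.1)).toReal * (ν (cellS d h s.2)).toReal) := by
      rw [bg, ENNReal.toReal_div, ENNReal.toReal_mul]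
    have hμpos : 0 < (μ (cellS d h s.1)).toReal := ENNReal.toReal_pos hμ0 hμt
    have hνpos : 0 < (ν (cellS d h s.2)).toReal := ENNReal.toReal_pos hν0 hνt
    have hwpos : 0 < (cw γ h s).toReal := ENNReal.toReal_pos hw0 hwtop
    have hwleμ : (cw γ h s).toReal ≤ (μ (cellS d h s.1)).toReal :=
      ENNReal.toReal_mono hμt (cw_le_fst h hcpl s)
    have hle : (bg μ ν γ h s).toReal ≤ 1 / (ν (cellS d h s.2)).toReal := by
      rw [hbg, div_le_div_iff₀ (by positivity) hνpos]
      calc (cw γ h s).toReal * (ν (cellS d h s.2)).toReal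
          ≤ (μ (cellS d h s.1)).toReal * (ν (cellS d h s.2)).toReal := by nlinarith
        _ = 1 * ((μ (cellS d h s.1)).toReal * (ν (cellS d h s.2)).toReal) := by ring
        _ ≤ _ := by nlinarith
    calc Real.log (bg μ ν γ h s).toReal ≤ Real.log (1 / (ν (cellS d h s.2)).toReal) := by
          apply Real.log_le_log (by rw [hbg]; positivity) hle
      _ = - Real.log (ν (cellS d h s.2)).toReal := by
          rw [one_div, Real.log_inv]
  refine le_trans (Finset.sum_le_sum hterm) ?_
  -- group by the second coordinate
  have hgroup : ∑ s ∈ F, (cw γ h s).toReal * (- Real.log (ν (cellS d h s.2)).toReal)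
      = ∑ j ∈ J', ∑ s ∈ F.filter (fun s => s.2 = j),
          (cw γ h s).toReal * (- Real.log (ν (cellS d h s.2)).toReal) := by
    rw [Finset.sum_fiberwise_of_maps_to (fun s hs => Finset.mem_image_of_mem Prod.snd hs)]
  rw [hgroup]
  -- per-column bound
  have hcol : ∀ j ∈ J', ∑ s ∈ F.filter (fun s => s.2 = j),
      (cw γ h s).toReal * (- Real.log (ν (cellS d h s.2)).toReal)
      ≤ (ν (cellS d h j)).toReal * (- Real.log (ν (cellS d h j)).toReal) := by
    intro j hj
    have hνj0 : ν (cellS d h j) ≠ 0 := by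
      obtain ⟨s, hsF, hsj⟩ := Finset.mem_image.mp hj
      have := hposν s hsF
      rwa [hsj] at this
    have hsum : ∑ s ∈ F.filter (fun s => s.2 = j), (cw γ h s).toReal
        ≤ (ν (cellS d h j)).toReal := by
      have h1 : ∑ s ∈ F.filter (fun s => s.2 = j), cw γ h s ≤ ν (cellS d h j) := by
        rw [← tsum_cw_snd h hcpl j]
        have hinj : ∀ a ∈ F.filter (fun s => s.2 = j), ∀ b ∈ F.filter (fun s => s.2 = j),
            a.1 = b.1 → a = b := by
          intro a ha b hb hab
          have ha2 : a.2 = j := (Finset.mem_filter.mp ha).2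
          have hb2 : b.2 = j := (Finset.mem_filter.mp hb).2
          exact Prod.ext hab (ha2.trans hb2.symm)
        calc ∑ s ∈ F.filter (fun s => s.2 = j), cw γ h s
            = ∑ i ∈ (F.filter (fun s => s.2 = j)).image Prod.fst, cw γ h (i, j) := by
              rw [Finset.sum_image hinj]
              apply Finset.sum_congr rfl
              intro s hs
              have h2 : s.2 = j := (Finset.mem_filter.mp hs).2
              rw [← h2]
          _ ≤ ∑' i, cw γ h (i, j) := ENNReal.sum_le_tsum _
      calc ∑ s ∈ F.filter (fun s => s.2 = j), (cw γ h s).toReal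
          = (∑ s ∈ F.filter (fun s => s.2 = j), cw γ h s).toReal :=
            (ENNReal.toReal_sum fun s _ =>
              ((cw_le_snd h hcpl s).trans_lt (measure_lt_top ν _)).ne).symm
        _ ≤ (ν (cellS d h j)).toReal := ENNReal.toReal_mono (measure_ne_top ν _) h1
    have hlogpos : 0 ≤ - Real.log (ν (cellS d h j)).toReal := by
      rw [neg_nonneg]
      apply Real.log_nonpos ENNReal.toReal_nonneg
      exact ENNReal.toReal_le_of_le_ofReal one_pos.le (by simpa using prob_le_one)
    calc ∑ s ∈ F.filter (fun s => s.2 = j),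
          (cw γ h s).toReal * (- Real.log (ν (cellS d h s.2)).toReal)
        = ∑ s ∈ F.filter (fun s => s.2 = j),
          (cw γ h s).toReal * (- Real.log (ν (cellS d h j)).toReal) := by
          apply Finset.sum_congr rfl
          intro s hs
          rw [(Finset.mem_filter.mp hs).2]
      _ = (∑ s ∈ F.filter (fun s => s.2 = j), (cw γ h s).toReal)
            * (- Real.log (ν (cellS d h j)).toReal) := by
          rw [Finset.sum_mul]
      _ ≤ _ := mul_le_mul_of_nonneg_right hsum hlogpos
  refine le_trans (Finset.sum_le_sum hcol) ?_
  -- final: Σ_{j ∈ J'} ν̃_j (-log ν̃_j) ≤ log |J'| + 1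
  rcases Finset.eq_empty_or_nonempty J' with hJe | hJne
  · rw [hJe]
    simp only [Finset.sum_empty, Finset.card_empty, Nat.cast_zero, Real.log_zero]
    norm_num
  · have hn1 : 1 ≤ (J'.card : ℝ) := by
      have := Finset.card_pos.mpr hJne
      exact_mod_cast this
    set n : ℝ := (J'.card : ℝ) with hn
    have hjbound : ∀ j ∈ J', (ν (cellS d h j)).toReal * (- Real.log (ν (cellS d h j)).toReal)
        ≤ 1/n - (ν (cellS d h j)).toReal + (ν (cellS d h j)).toReal * Real.log n := by
      intro j hj
      have hνj0 : ν (cellS d h j) ≠ 0 := by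
        obtain ⟨s, hsF, hsj⟩ := Finset.mem_image.mp hj
        have := hposν s hsF
        rwa [hsj] at this
      set v := (ν (cellS d h j)).toReal with hv
      have hvpos : 0 < v := ENNReal.toReal_pos hνj0 (measure_ne_top ν _)
      have hnpos : 0 < n := lt_of_lt_of_le one_pos hn1
      have hkey : Real.log (1/(n*v)) ≤ 1/(n*v) - 1 :=
        Real.log_le_sub_one_of_pos (by positivity)
      have hlogsplit : Real.log (1/(n*v)) = - Real.log n - Real.log v := by
        rw [one_div, Real.log_inv, Real.log_mul (ne_of_gt hnpos) (ne_of_gt hvpos)]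
        ring
      have := mul_le_mul_of_nonneg_left hkey hvpos.le
      rw [hlogsplit] at this
      have hvnv : v * (1/(n*v) - 1) = 1/n - v := by
        field_simp
      rw [hvnv] at this
      nlinarith
    calc ∑ j ∈ J', (ν (cellS d h j)).toReal * (- Real.log (ν (cellS d h j)).toReal)
        ≤ ∑ j ∈ J', (1/n - (ν (cellS d h j)).toReal + (ν (cellS d h j)).toReal * Real.log n) :=
          Finset.sum_le_sum hjbound
      _ = J'.card * (1/n) - (∑ j ∈ J', (ν (cellS d h j)).toReal)
            + (∑ j ∈ J', (ν (cellS d h j)).toReal) * Real.log n := by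
          rw [Finset.sum_add_distrib, Finset.sum_sub_distrib, Finset.sum_const,
            ← Finset.sum_mul]
          simp [nsmul_eq_mul]
      _ ≤ Real.log n + 1 := by
          have hsum1 : ∑ j ∈ J', (ν (cellS d h j)).toReal ≤ 1 := by
            have h1 : ∑ j ∈ J', ν (cellS d h j) ≤ 1 := by
              have hdisj : (↑J' : Set (Fin d → ℤ)).PairwiseDisjoint (cellS d h) := by
                intro a _ b _ hab
                exact disjoint_cellS h hab
              calc ∑ j ∈ J', ν (cellS d h j) = ν (⋃ j ∈ J', cellS d h j) :=
                    (measure_biUnion_finset hdisj fun j _ => measurableSet_cellS h j).symm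
                _ ≤ 1 := prob_le_one
            calc ∑ j ∈ J', (ν (cellS d h j)).toReal
                = (∑ j ∈ J', ν (cellS d h j)).toReal :=
                  (ENNReal.toReal_sum fun j _ => measure_ne_top ν _).symm
              _ ≤ 1 := ENNReal.toReal_le_of_le_ofReal one_pos.le (by simpa using h1)
          have hsumnn : 0 ≤ ∑ j ∈ J', (ν (cellS d h j)).toReal :=
            Finset.sum_nonneg fun j _ => ENNReal.toReal_nonneg
          have hlogn : 0 ≤ Real.log n := Real.log_nonneg hn1
          have hcardn : (J'.card : ℝ) * (1/n) = 1 := by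
            rw [hn]; field_simp
          nlinarith

section Count
variable {d : ℕ}

/-- the box of possible indices of cells meeting the ball of radius R -/
def boxF (d : ℕ) (h R : ℝ) : Finset (Fin d → ℤ) :=
  Fintype.piFinset fun _ : Fin d => Finset.Icc ⌊-R/h⌋ ⌊R/h⌋

lemma active_subset_boxF (μ : Measure (Rd d)) {h R : ℝ} (hh : 0 < h)
    (hsupp : ∀ x ∈ msupport μ, ‖x‖ ≤ R) :
    {i : Fin d → ℤ | μ (cellS d h i) ≠ 0} ⊆ ↑(boxF d h R) := by
  intro i hi
  have hne : (cellS d h i ∩ msupport μ).Nonempty := by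
    rw [Set.nonempty_iff_ne_empty]
    intro hempty
    apply hi
    have hsub : cellS d h i ⊆ (msupport μ)ᶜ := by
      intro x hx
      intro hxs
      exact Set.eq_empty_iff_forall_notMem.mp hempty x ⟨hx, hxs⟩
    exact measure_mono_null hsub (msupport_compl_null μ)
  obtain ⟨x, hxc, hxs⟩ := hne
  have hxi : qc h x = i := hxc
  have hnorm := hsupp x hxs
  simp only [Finset.mem_coe, boxF, Fintype.mem_piFinset]
  intro k
  rw [Finset.mem_Icc, ← hxi]
  have habs : |x k| ≤ R := (abs_coord_le_norm x k).trans hnorm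
  obtain ⟨hl, hr⟩ := abs_le.mp habs
  have h1 : -R / h ≤ x k / h := by gcongr
  have h2 : x k / h ≤ R / h := by gcongr
  exact ⟨Int.floor_mono h1, Int.floor_mono h2⟩

lemma boxF_card_le {h R : ℝ} (hh : 0 < h) (hR : 1 ≤ R) :
    ((boxF d h R).card : ℝ) ≤ (2*R/h + 2)^d := by
  have hfac : ((Finset.Icc ⌊-R/h⌋ ⌊R/h⌋).card : ℝ) ≤ 2*R/h + 2 := by
    rw [Int.card_Icc]
    have hle : ⌊-R/h⌋ ≤ ⌊R/h⌋ := by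
      apply Int.floor_mono
      have h0R : (0:ℝ) < R := lt_of_lt_of_le one_pos hR
      gcongr
      linarith
    have hnn : 0 ≤ ⌊R/h⌋ + 1 - ⌊-R/h⌋ := by omega
    have hcast : (((⌊R/h⌋ + 1 - ⌊-R/h⌋).toNat : ℕ) : ℝ)
        = ((⌊R/h⌋ : ℝ) + 1 - (⌊-R/h⌋ : ℝ)) := by
      exact_mod_cast Int.toNat_of_nonneg hnn
    rw [hcast]
    have e1 : (⌊R/h⌋ : ℝ) ≤ R/h := Int.floor_le _
    have e2 : -R/h - 1 < (⌊-R/h⌋ : ℝ) := Int.sub_one_lt_floor _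
    have : (2:ℝ)*R/h = R/h + R/h := by ring
    rw [this]
    have : -((-R)/h) = R/h := by ring
    nlinarith
  have hcard : (boxF d h R).card = (Finset.Icc ⌊-R/h⌋ ⌊R/h⌋).card ^ d := by
    rw [boxF, Fintype.card_piFinset]
    simp [Finset.prod_const]
  rw [hcard]
  push_cast
  apply pow_le_pow_left₀ (by positivity) hfac

lemma count_main {μ ν : Measure (Rd d)} {γ : Measure (Rd d × Rd d)}
    (hcpl : IsCoupling γ μ ν) {h R : ℝ} (hh : 0 < h) (hR : 1 ≤ R)
    (hsμ : ∀ x ∈ msupport μ, ‖x‖ ≤ R) (hsν : ∀ x ∈ msupport ν, ‖x‖ ≤ R) :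
    ∃ hAct : {s : (Fin d → ℤ) × (Fin d → ℤ) | cw γ h s ≠ 0}.Finite,
      ((hAct.toFinset.image Prod.snd).card : ℝ) ≤ (2*R/h + 2)^d := by
  have hsubI := active_subset_boxF μ hh hsμ
  have hsubJ := active_subset_boxF ν hh hsν
  have hposμ : ∀ s : (Fin d → ℤ) × (Fin d → ℤ), cw γ h s ≠ 0 → μ (cellS d h s.1) ≠ 0 :=
    fun s hs h0 => hs (le_antisymm (by simpa [h0] using cw_le_fst h hcpl s) zero_le)
  have hposν : ∀ s : (Fin d → ℤ) × (Fin d → ℤ), cw γ h s ≠ 0 → ν (cellS d h s.2) ≠ 0 :=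
    fun s hs h0 => hs (le_antisymm (by simpa [h0] using cw_le_snd h hcpl s) zero_le)
  have hsub : {s : (Fin d → ℤ) × (Fin d → ℤ) | cw γ h s ≠ 0} ⊆
      ↑(boxF d h R ×ˢ boxF d h R) := by
    intro s hs
    rw [Finset.coe_product]
    exact ⟨hsubI (hposμ s hs), hsubJ (hposν s hs)⟩
  have hAct : {s : (Fin d → ℤ) × (Fin d → ℤ) | cw γ h s ≠ 0}.Finite :=
    Set.Finite.subset (boxF d h R ×ˢ boxF d h R).finite_toSet hsub
  refine ⟨hAct, ?_⟩
  have himg : hAct.toFinset.image Prod.snd ⊆ boxF d h R := by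
    intro j hj
    obtain ⟨s, hsF, rfl⟩ := Finset.mem_image.mp hj
    rw [Set.Finite.mem_toFinset] at hsF
    exact hsubJ (hposν s hsF)
  calc ((hAct.toFinset.image Prod.snd).card : ℝ) ≤ ((boxF d h R).card : ℝ) := by
        exact_mod_cast Finset.card_le_card himg
    _ ≤ (2*R/h + 2)^d := boxF_card_le hh hR

end Count


lemma key_real {a E p lam : ℝ} (hp : 1 ≤ p) (hE : 0 ≤ E) (hlam : 0 < lam) (ha : 1 + lam ≤ a) :
    (a^p + E)^(1/p) ≤ a + (E/p) * (1+lam) * Real.exp (-Real.log (1+lam) * p) := by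
  have hap : 0 < a := by linarith
  have hp0 : 0 < p := by linarith
  have happ : (0:ℝ) < a^p := Real.rpow_pos_of_pos hap p
  set x := E / (p * a^p) with hx
  have hx0 : 0 ≤ x := by positivity
  have bern : 1 + p * x ≤ (1+x)^p := one_add_mul_self_le_rpow_one_add (by linarith) hp
  have h1 : a^p + E ≤ (a * (1+x))^p := by
    rw [Real.mul_rpow hap.le (by linarith)]
    have hid : a^p * (1 + p*x) = a^p + E := by
      rw [hx]; field_simp
    nlinarith
  have h2 : (a^p + E)^(1/p) ≤ a * (1+x) := by
    calc (a^p+E)^(1/p) ≤ ((a*(1+x))^p)^(1/p) :=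
          Real.rpow_le_rpow (by positivity) h1 (by positivity)
      _ = a * (1+x) := by
          rw [← Real.rpow_mul (by positivity), mul_one_div, div_self hp0.ne', Real.rpow_one]
  refine h2.trans ?_
  set L := Real.log (1+lam) with hL
  have h1lam : (0:ℝ) < 1 + lam := by linarith
  have hLpow : (1+lam)^(p-1) = Real.exp (L * (p-1)) := Real.rpow_def_of_pos h1lam _
  have hLpos : (0:ℝ) < (1+lam)^(p-1) := Real.rpow_pos_of_pos h1lam _
  have hpa : (1+lam)^(p-1) * a ≤ a^p := by
    have h3 : (1+lam)^(p-1) ≤ a^(p-1) := Real.rpow_le_rpow h1lam.le ha (by linarith)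
    have h4 : a^p = a^(p-1) * a := by
      rw [← Real.rpow_add_one hap.ne' (p-1)]
      ring_nf
    rw [h4]
    nlinarith [Real.rpow_pos_of_pos hap (p-1)]
  have hxle : a * x ≤ E / (p * (1+lam)^(p-1)) := by
    rw [hx, ← mul_div_assoc, div_le_div_iff₀ (by positivity) (by positivity)]
    calc a * E * (p * (1+lam)^(p-1)) = E * p * ((1+lam)^(p-1) * a) := by ring
      _ ≤ E * p * a^p := mul_le_mul_of_nonneg_left hpa (by positivity)
      _ = E * (p * a^p) := by ring
  have h5 : Real.exp (-L*p) * (1+lam)^(p-1) * (1+lam) = 1 := by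
    nth_rewrite 2 [← Real.exp_log h1lam]
    rw [hLpow, ← hL, ← Real.exp_add, ← Real.exp_add,
      show -L*p + L*(p-1) + L = 0 by ring, Real.exp_zero]
  have hEq : (E/p) * (1+lam) * Real.exp (-L * p) = E / (p * (1+lam)^(p-1)) := by
    rw [_root_.eq_div_iff (by positivity : (0:ℝ) < p * (1+lam)^(p-1)).ne']
    calc (E/p) * (1+lam) * Real.exp (-L*p) * (p*(1+lam)^(p-1))
        = (E/p*p) * (Real.exp (-L*p) * (1+lam)^(p-1) * (1+lam)) := by ring
      _ = E := by rw [h5, div_mul_cancel₀ _ hp0.ne', mul_one]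
  rw [← hEq] at hxle
  have hsplit : a * (1+x) = a + a * x := by ring
  rw [hsplit]
  linarith

lemma prod_isCoupling {d : ℕ} (μ ν : Measure (Rd d)) [IsProbabilityMeasure μ]
    [IsProbabilityMeasure ν] : IsCoupling (μ.prod ν) μ ν := by
  constructor
  · rw [Measure.map_fst_prod]; simp
  · rw [Measure.map_snd_prod]; simp

lemma vInfty_ne_top {d : ℕ} (c : Rd d × Rd d → ℝ) (hc : Continuous c)
    (μ ν : Measure (Rd d)) [IsProbabilityMeasure μ] [IsProbabilityMeasure ν]
    (hμ : IsCompact (msupport μ)) (hν : IsCompact (msupport ν)) :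
    vInfty c μ ν ≠ ⊤ := by
  obtain ⟨C, hC⟩ := (hμ.prod hν).exists_bound_of_continuousOn hc.continuousOn
  have hae : ∀ᵐ z ∂(μ.prod ν), ENNReal.ofReal (c z) ≤ ENNReal.ofReal C := by
    have h1 : (μ.prod ν) ((msupport μ)ᶜ ×ˢ (Set.univ : Set (Rd d))) = 0 := by
      rw [Measure.prod_prod, msupport_compl_null, zero_mul]
    have h2 : (μ.prod ν) ((Set.univ : Set (Rd d)) ×ˢ (msupport ν)ᶜ) = 0 := by
      rw [Measure.prod_prod, msupport_compl_null, mul_zero]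
    have h3 : ∀ᵐ z ∂(μ.prod ν), z.1 ∈ msupport μ := by
      rw [ae_iff]
      refine measure_mono_null ?_ h1
      intro z hz
      exact ⟨hz, Set.mem_univ _⟩
    have h4 : ∀ᵐ z ∂(μ.prod ν), z.2 ∈ msupport ν := by
      rw [ae_iff]
      refine measure_mono_null ?_ h2
      intro z hz
      exact ⟨Set.mem_univ _, hz⟩
    filter_upwards [h3, h4] with z hz1 hz2
    apply ENNReal.ofReal_le_ofReal
    calc c z ≤ |c z| := le_abs_self _
      _ ≤ C := by simpa [Real.norm_eq_abs] using hC z ⟨hz1, hz2⟩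
  have hJ : Jinf c μ ν (μ.prod ν) ≤ ENNReal.ofReal C := by
    rw [Jinf, if_pos (prod_isCoupling μ ν)]
    exact essSup_le_of_ae_le _ hae
  have hv : vInfty c μ ν ≤ Jinf c μ ν (μ.prod ν) :=
    iInf_le_of_le (μ.prod ν) (iInf_le_of_le inferInstance (iInf_le _ (prod_isCoupling μ ν)))
  exact ((hv.trans hJ).trans_lt ENNReal.ofReal_lt_top).ne


set_option maxHeartbeats 1000000 in
/-- (Upper bound on the speed of convergence, λ > 0) If c is α-Hölder and v_∞ ≥ 1+λ with λ > 0,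
    then v_p − v_∞ ≤ B·e^{−βp} eventually, with β = min{α, log(1+λ)}. -/
theorem speed_upper_bound_pos {d : ℕ} (c : Rd d × Rd d → ℝ) (hc : Continuous c)
    (hc0 : ∀ z, 0 ≤ c z)
    (α : ℝ) (hα : α ∈ Set.Ioc (0 : ℝ) 1)
    (A : ℝ) (hA : 0 ≤ A) (hHolder : ∀ z w : Rd d × Rd d, |c z - c w| ≤ A * dist z w ^ α)
    (μ ν : Measure (Rd d)) [IsProbabilityMeasure μ] [IsProbabilityMeasure ν]
    (hμ : IsCompact (msupport μ)) (hν : IsCompact (msupport ν))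
    (lam : ℝ) (hlam : 0 < lam) (hvinf : ENNReal.ofReal (1 + lam) ≤ vInfty c μ ν) :
    ∃ B > (0 : ℝ), ∃ p₀ : ℝ, 1 ≤ p₀ ∧ ∀ p ≥ p₀,
      vP c μ ν p ≤ vInfty c μ ν +
        ENNReal.ofReal (B * Real.exp (-(min α (Real.log (1 + lam))) * p)) := by
  obtain ⟨hα0, hα1⟩ := hα
  have h1lam : (0:ℝ) < 1 + lam := by linarith
  set L := Real.log (1 + lam) with hLdef
  -- bound the supports
  obtain ⟨R₁, hR₁⟩ := hμ.isBounded.subset_closedBall 0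
  obtain ⟨R₂, hR₂⟩ := hν.isBounded.subset_closedBall 0
  set R := max 1 (max R₁ R₂) with hRdef
  have hR1 : (1:ℝ) ≤ R := le_max_left _ _
  have hsμ : ∀ x ∈ msupport μ, ‖x‖ ≤ R := by
    intro x hx
    have := hR₁ hx
    rw [Metric.mem_closedBall, dist_zero_right] at this
    exact this.trans ((le_max_left _ _).trans (le_max_right _ _))
  have hsν : ∀ x ∈ msupport ν, ‖x‖ ≤ R := by
    intro x hx
    have := hR₂ hx
    rw [Metric.mem_closedBall, dist_zero_right] at this
    exact this.trans ((le_max_right _ _).trans (le_max_right _ _))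
  -- vInfty is finite
  have hvfin : vInfty c μ ν ≠ ⊤ := vInfty_ne_top c hc μ ν hμ hν
  set M := (vInfty c μ ν).toReal with hMdef
  have hM1 : 1 + lam ≤ M := by
    have := ENNReal.toReal_mono hvfin hvinf
    rwa [ENNReal.toReal_ofReal h1lam.le] at this
  have hM0 : 0 ≤ M := by linarith
  -- constants
  have hlog4R : 0 ≤ Real.log (4*R) := Real.log_nonneg (by linarith)
  set C₁ : ℝ := 1 + d * Real.log (4*R) with hC₁def
  have hC₁0 : (0:ℝ) ≤ C₁ := by positivity
  set C₂ : ℝ := 1 + A*(1+d) with hC₂def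
  have hC₂0 : (0:ℝ) < C₂ := by positivity
  set C₃ : ℝ := (C₁ + d) * (1+lam) with hC₃def
  have hC₃0 : (0:ℝ) ≤ C₃ := by positivity
  refine ⟨C₂ + C₃, by positivity, 1, le_refl 1, ?_⟩
  intro p hp
  have hp0 : (0:ℝ) < p := lt_of_lt_of_le one_pos hp
  set β := min α L with hβdef
  set sz := Real.exp (-p) with hszdef
  have hsz : 0 < sz := Real.exp_pos _
  -- near-optimal coupling for J∞
  have hεpos : (ENNReal.ofReal (Real.exp (-(α*p)))) ≠ 0 :=
    ne_of_gt (ENNReal.ofReal_pos.mpr (Real.exp_pos _))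
  have hlt : vInfty c μ ν < vInfty c μ ν + ENNReal.ofReal (Real.exp (-(α*p))) :=
    ENNReal.lt_add_right hvfin hεpos
  have hlt2 : (⨅ (γ : Measure (Rd d × Rd d)) (_ : IsProbabilityMeasure γ)
      (_ : IsCoupling γ μ ν), Jinf c μ ν γ)
      < vInfty c μ ν + ENNReal.ofReal (Real.exp (-(α*p))) := hlt
  obtain ⟨γ, hγ1⟩ := iInf_lt_iff.mp hlt2
  obtain ⟨hγprob, hγ2⟩ := iInf_lt_iff.mp hγ1
  obtain ⟨hγcpl, hγ3⟩ := iInf_lt_iff.mp hγ2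
  haveI := hγprob
  have hXfin : vInfty c μ ν + ENNReal.ofReal (Real.exp (-(α*p))) ≠ ⊤ :=
    ENNReal.add_ne_top.mpr ⟨hvfin, ENNReal.ofReal_ne_top⟩
  have hJγfin : Jinf c μ ν γ ≠ ⊤ :=
    ne_top_of_lt (hγ3.trans (lt_top_iff_ne_top.mpr hXfin))
  set t := (Jinf c μ ν γ).toReal with htdef
  have hvleJ : vInfty c μ ν ≤ Jinf c μ ν γ :=
    iInf_le_of_le γ (iInf_le_of_le hγprob (iInf_le _ hγcpl))
  have htM : 1 + lam ≤ t := by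
    have := ENNReal.toReal_mono hJγfin (hvinf.trans hvleJ)
    rwa [ENNReal.toReal_ofReal h1lam.le] at this
  have ht0 : 0 ≤ t := by linarith
  have htub : t ≤ M + Real.exp (-(α*p)) := by
    have h6 := ENNReal.toReal_mono hXfin hγ3.le
    rwa [ENNReal.toReal_add hvfin ENNReal.ofReal_ne_top,
      ENNReal.toReal_ofReal (Real.exp_pos _).le] at h6
  have hesssup : ∀ᵐ z ∂γ, c z ≤ t := by
    have h4 : Jinf c μ ν γ = essSup (fun z => ENNReal.ofReal (c z)) γ := if_pos hγcpl
    filter_upwards [ae_le_essSup (fun z => ENNReal.ofReal (c z))] with z hz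
    rw [← h4] at hz
    have h5 := ENNReal.toReal_mono hJγfin hz
    rwa [ENNReal.toReal_ofReal (hc0 z)] at h5
  -- block approximation
  set γ2 := blockM μ ν γ sz with hγ2def
  haveI hγ2prob := blockM_prob (μ := μ) (ν := ν) (γ := γ) sz hγcpl
  have hγ2cpl : IsCoupling γ2 μ ν := blockM_isCoupling sz hγcpl
  have hex : ∃ n : ℕ, ((n:ℝ) ≤ (2*R/sz + 2)^d) ∧
      relEntropy γ2 (μ.prod ν) ≤ ENNReal.ofReal (Real.log n + 1) := by
    obtain ⟨hAct, hcard⟩ := count_main hγcpl hsz hR1 hsμ hsν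
    exact ⟨(hAct.toFinset.image Prod.snd).card, hcard, blockM_relEntropy_le sz hγcpl hAct⟩
  obtain ⟨n, hcard, hentn⟩ := hex
  -- entropy bound
  set E : ℝ := C₁ + d * p with hEdef
  have hE0 : 0 ≤ E := by positivity
  have hent : relEntropy γ2 (μ.prod ν) ≤ ENNReal.ofReal E := by
    refine hentn.trans (ENNReal.ofReal_le_ofReal ?_)
    have hb : (2*R/sz + 2 : ℝ) ≤ 4*R*Real.exp p := by
      have hinv : sz⁻¹ = Real.exp p := by
        rw [hszdef, ← Real.exp_neg, neg_neg]
      have hexp1 : (1:ℝ) ≤ Real.exp p := Real.one_le_exp hp0.le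
      rw [div_eq_mul_inv, hinv]
      nlinarith
    have hlogn : Real.log n ≤ d * (Real.log (4*R) + p) := by
      have hrhs : 0 ≤ (d:ℝ) * (Real.log (4*R) + p) := by positivity
      rcases Nat.eq_zero_or_pos n with hn0 | hnpos
      · rw [hn0]
        simpa using hrhs
      · have hnn : (0:ℝ) < n := by exact_mod_cast hnpos
        have h7 : (n:ℝ) ≤ (4*R*Real.exp p)^d :=
          hcard.trans (pow_le_pow_left₀ (by positivity) hb d)
        calc Real.log n ≤ Real.log ((4*R*Real.exp p)^d) := Real.log_le_log hnn h7
          _ = d * Real.log (4*R*Real.exp p) := by rw [Real.log_pow]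
          _ = d * (Real.log (4*R) + p) := by
              rw [Real.log_mul (by positivity) (Real.exp_ne_zero p), Real.log_exp]
    have hdist : (d:ℝ) * (Real.log (4*R) + p) = d * Real.log (4*R) + d * p := by ring
    rw [hEdef, hC₁def]
    linarith
  -- cost bound
  set a : ℝ := t + A*(1+d)*Real.exp (-(α*p)) with hadef
  have hcost : ∀ᵐ z ∂γ2, c z ≤ a := by
    filter_upwards [blockM_ae_cost sz hsz hγcpl c hc A α hA hα0 hHolder t hesssup] with z hz
    refine hz.trans ?_
    have h6 : sz ^ α = Real.exp (-(α*p)) := by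
      rw [hszdef, Real.rpow_def_of_pos (Real.exp_pos _), Real.log_exp]
      ring_nf
    have h7 : Real.sqrt d ^ α ≤ 1 + d := by
      have hd0 : (0:ℝ) ≤ d := Nat.cast_nonneg d
      rcases le_total (Real.sqrt d) 1 with hsd | hsd
      · have := Real.rpow_le_one (Real.sqrt_nonneg d) hsd hα0.le
        linarith
      · have h8 : Real.sqrt d ^ α ≤ Real.sqrt d ^ (1:ℝ) :=
          Real.rpow_le_rpow_of_exponent_le hsd hα1
        rw [Real.rpow_one] at h8
        have h9 : Real.sqrt d ≤ d := by
          nlinarith [Real.sq_sqrt hd0, Real.sqrt_nonneg d]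
        linarith
    have h10 : (sz * Real.sqrt d)^α ≤ (1+d) * Real.exp (-(α*p)) := by
      rw [Real.mul_rpow hsz.le (Real.sqrt_nonneg _), h6]
      calc Real.exp (-(α*p)) * Real.sqrt d ^ α ≤ Real.exp (-(α*p)) * (1+d) :=
            mul_le_mul_of_nonneg_left h7 (Real.exp_pos _).le
        _ = (1+d) * Real.exp (-(α*p)) := by ring
    have h11 : A * (sz * Real.sqrt d)^α ≤ A*(1+d)*Real.exp (-(α*p)) := by
      calc A * (sz * Real.sqrt d)^α ≤ A * ((1+d) * Real.exp (-(α*p))) :=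
            mul_le_mul_of_nonneg_left h10 hA
        _ = A*(1+d)*Real.exp (-(α*p)) := by ring
    linarith
  have ha1lam : 1 + lam ≤ a := by
    have hpos : 0 ≤ A*(1+d)*Real.exp (-(α*p)) := by positivity
    linarith
  have ha0 : 0 ≤ a := by linarith
  -- vP ≤ Jpe γ2
  have hvPle : vP c μ ν p ≤ Jpe c μ ν p 1 γ2 :=
    iInf_le_of_le γ2 (iInf_le_of_le hγ2prob (iInf_le _ hγ2cpl))
  have hJpe : Jpe c μ ν p 1 γ2 ≤ ENNReal.ofReal ((a^p + E)^(1/p)) := by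
    rw [Jpe, if_pos hγ2cpl,
      ← ENNReal.ofReal_rpow_of_nonneg (by positivity) (by positivity : (0:ℝ) ≤ 1/p)]
    apply ENNReal.rpow_le_rpow _ (by positivity)
    rw [ENNReal.ofReal_one, one_mul, ENNReal.ofReal_add (by positivity) hE0]
    refine add_le_add ?_ hent
    have hptw : ∀ᵐ z ∂γ2, ENNReal.ofReal (c z ^ p) ≤ ENNReal.ofReal (a ^ p) := by
      filter_upwards [hcost] with z hz
      exact ENNReal.ofReal_le_ofReal (Real.rpow_le_rpow (hc0 z) hz hp0.le)
    calc ∫⁻ z, ENNReal.ofReal (c z ^ p) ∂γ2 ≤ ∫⁻ _z, ENNReal.ofReal (a ^ p) ∂γ2 :=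
          lintegral_mono_ae hptw
      _ = ENNReal.ofReal (a ^ p) := by rw [lintegral_const, measure_univ, mul_one]
  have hre : (a^p + E)^(1/p) ≤ a + (E/p) * (1+lam) * Real.exp (-L * p) :=
    key_real hp hE0 hlam ha1lam
  have hfinal : a + (E/p) * (1+lam) * Real.exp (-L * p) ≤ M + (C₂+C₃) * Real.exp (-β*p) := by
    have hβα : β ≤ α := min_le_left _ _
    have hβL : β ≤ L := min_le_right _ _
    have e1 : Real.exp (-(α*p)) ≤ Real.exp (-β*p) := by
      apply Real.exp_le_exp.mpr
      nlinarith
    have e2 : Real.exp (-L*p) ≤ Real.exp (-β*p) := by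
      apply Real.exp_le_exp.mpr
      nlinarith
    have e3 : E/p ≤ C₁ + d := by
      rw [hEdef, add_div]
      have f1 : C₁/p ≤ C₁ := div_le_self hC₁0 hp
      have f2 : (d:ℝ)*p/p = d := by field_simp
      linarith
    have e4 : a ≤ M + C₂ * Real.exp (-(α*p)) := by
      rw [hadef, hC₂def]
      have hsplit : (1 + A*(1+d)) * Real.exp (-(α*p))
          = Real.exp (-(α*p)) + A*(1+d)*Real.exp (-(α*p)) := by ring
      linarith
    have e5 : (E/p) * (1+lam) * Real.exp (-L*p) ≤ C₃ * Real.exp (-β*p) := by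
      calc (E/p) * (1+lam) * Real.exp (-L*p) ≤ (C₁+d) * (1+lam) * Real.exp (-L*p) := by
            apply mul_le_mul_of_nonneg_right
              (mul_le_mul_of_nonneg_right e3 h1lam.le) (Real.exp_pos _).le
        _ ≤ (C₁+d) * (1+lam) * Real.exp (-β*p) := by
            apply mul_le_mul_of_nonneg_left e2 (by positivity)
        _ = C₃ * Real.exp (-β*p) := by rw [hC₃def]
    have e6 : C₂ * Real.exp (-(α*p)) ≤ C₂ * Real.exp (-β*p) :=
      mul_le_mul_of_nonneg_left e1 hC₂0.le
    calc a + E / p * (1 + lam) * Real.exp (-L * p)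
        ≤ (M + C₂ * Real.exp (-(α*p))) + C₃ * Real.exp (-β*p) := add_le_add e4 e5
      _ ≤ (M + C₂ * Real.exp (-β*p)) + C₃ * Real.exp (-β*p) :=
          add_le_add (add_le_add le_rfl e6) le_rfl
      _ = M + (C₂+C₃) * Real.exp (-β*p) := by ring
  calc vP c μ ν p ≤ ENNReal.ofReal ((a^p + E)^(1/p)) := hvPle.trans hJpe
    _ ≤ ENNReal.ofReal (M + (C₂+C₃) * Real.exp (-β*p)) :=
        ENNReal.ofReal_le_ofReal (hre.trans hfinal)
    _ = ENNReal.ofReal M + ENNReal.ofReal ((C₂+C₃) * Real.exp (-β*p)) :=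
        ENNReal.ofReal_add hM0 (by positivity)
    _ = vInfty c μ ν + ENNReal.ofReal ((C₂+C₃) * Real.exp (-β*p)) := by
        rw [hMdef, ENNReal.ofReal_toReal hvfin]
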